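/- Let U₁,…,Uₙ be independent real random variables with E[Uᵢ] = 0. Then for every real m ≥ 2 there exists a constant c_m depending only on m such that E[ |∑ᵢ Uᵢ|^m ] ≤ c_m · n^{m/2 − 1} · ∑ᵢ E[|Uᵢ|^m]. -/

import Mathlib

open MeasureTheory ProbabilityTheory
open scoped ENNReal

namespace PetrovAux

lemma psi_near (m : ℝ) (hm : 2 ≤ m) {u : ℝ} (hu : |u| ≤ 1/2) {t : ℝ}
    (ht : t ∈ Set.Icc (-|u|) |u|) :
    |(1+t)^(m-1) - 1| ≤ ((m-1)*(3/2)^(m-2)) * |u| := by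
  have habs : ∀ r : ℝ, r ∈ Set.Icc (-|u|) |u| → (1:ℝ)/2 ≤ 1 + r ∧ 1 + r ≤ 3/2 := by
    intro r hr
    obtain ⟨h1, h2⟩ := hr
    constructor <;> nlinarith [abs_nonneg u]
  have key := Convex.norm_image_sub_le_of_norm_hasDerivWithin_le
    (f := fun r : ℝ => (1+r)^(m-1)) (f' := fun r : ℝ => (m-1)*(1+r)^(m-1-1)*1)
    (s := Set.Icc (-|u|) (|u|)) (C := (m-1)*(3/2)^(m-2))
    (fun r hr => by
      have hr0 : (1:ℝ) + r ≠ 0 := by have := (habs r hr).1; positivity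
      exact (HasDerivAt.comp r (Real.hasDerivAt_rpow_const (p := m-1) (Or.inl hr0))
        ((hasDerivAt_id r).const_add 1)).hasDerivWithinAt)
    (fun r hr => by
      obtain ⟨h1, h2⟩ := habs r hr
      have h1' : (0:ℝ) ≤ 1 + r := by linarith
      have hb : (1+r)^(m-2) ≤ (3/2:ℝ)^(m-2) :=
        Real.rpow_le_rpow h1' h2 (by linarith)
      have hpos : (0:ℝ) ≤ (1+r)^(m-2) := Real.rpow_nonneg h1' _
      simp only [Real.norm_eq_abs]
      have he : m - 1 - 1 = m - 2 := by ring
      rw [mul_one, he, abs_mul, abs_of_nonneg (by linarith : (0:ℝ) ≤ m-1),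
        abs_of_nonneg hpos]
      exact mul_le_mul_of_nonneg_left hb (by linarith))
    (convex_Icc _ _)
    (by constructor <;> simp [abs_nonneg u, neg_nonpos] : (0:ℝ) ∈ Set.Icc (-|u|) |u|)
    ht
  simp only [Real.norm_eq_abs] at key
  rw [(by norm_num : (1:ℝ) + 0 = 1), Real.one_rpow, sub_zero] at key
  calc |(1+t)^(m-1) - 1| ≤ (m-1)*(3/2)^(m-2) * |t| := key
    _ ≤ (m-1)*(3/2)^(m-2) * |u| := by
        have h32 : (0:ℝ) ≤ (m-1)*(3/2)^(m-2) := by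
          have := Real.rpow_nonneg (by norm_num : (0:ℝ) ≤ 3/2) (m-2)
          nlinarith
        exact mul_le_mul_of_nonneg_left (abs_le.2 ⟨ht.1, ht.2⟩) h32


lemma one_var (m : ℝ) (hm : 2 ≤ m) {u : ℝ} (hu : |u| ≤ 1/2) :
    (1+u)^m ≤ 1 + m*u + (m*((m-1)*(3/2)^(m-2)))*u^2 := by
  set L : ℝ := (m-1)*(3/2)^(m-2) with hL
  have hL0 : 0 ≤ L := by
    have := Real.rpow_nonneg (by norm_num : (0:ℝ) ≤ 3/2) (m-2)
    nlinarith
  have key := Convex.norm_image_sub_le_of_norm_hasDerivWithin_le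
    (f := fun t : ℝ => (1+t)^m - 1 - m*t)
    (f' := fun t : ℝ => m*(1+t)^(m-1)*1 - m*1)
    (s := Set.Icc (-|u|) (|u|)) (C := m*(L*|u|))
    (fun r hr => by
      have hr0 : (1:ℝ) + r ≠ 0 := by
        obtain ⟨h1, h2⟩ := hr
        have : |u| ≤ 1/2 := hu
        have : -(1/2:ℝ) ≤ r := by linarith [neg_le_neg this]
        have : (0:ℝ) < 1 + r := by linarith
        exact this.ne'
      have h1 : HasDerivAt (fun t : ℝ => (1+t)^m) (m*(1+r)^(m-1)*1) r :=
        HasDerivAt.comp r (Real.hasDerivAt_rpow_const (p := m) (Or.inl hr0))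
          ((hasDerivAt_id r).const_add 1)
      exact (((h1.sub_const 1).sub ((hasDerivAt_id r).const_mul m)).hasDerivWithinAt)
    )
    (fun r hr => by
      have hpsi := psi_near m hm hu hr
      simp only [Real.norm_eq_abs, mul_one]
      rw [show m*(1+r)^(m-1) - m = m*((1+r)^(m-1) - 1) by ring, abs_mul,
        abs_of_nonneg (by linarith : (0:ℝ) ≤ m)]
      exact mul_le_mul_of_nonneg_left hpsi (by linarith))
    (convex_Icc _ _)
    (by constructor <;> simp [abs_nonneg u, neg_nonpos] : (0:ℝ) ∈ Set.Icc (-|u|) |u|)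
    (by constructor <;> simp [le_abs_self, neg_abs_le] : u ∈ Set.Icc (-|u|) |u|)
  simp only [Real.norm_eq_abs] at key
  rw [(by norm_num : (1:ℝ) + 0 = 1), Real.one_rpow, mul_zero, sub_zero, sub_self, sub_zero,
    sub_zero] at key
  have h2 : (1+u)^m - 1 - m*u ≤ m*(L*|u|) * |u| := le_trans (le_abs_self _) key
  have h3 : m*(L*|u|)*|u| = m*L*(|u| * |u|) := by ring
  rw [h3, abs_mul_abs_self, ← sq] at h2
  linarith

noncomputable def K (m : ℝ) : ℝ := 3^m + m*2^m + m*((m-1)*(3/2)^(m-2))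

lemma K_pos (m : ℝ) (hm : 2 ≤ m) : 0 < K m := by
  unfold K
  have h1 : (0:ℝ) < 3^m := Real.rpow_pos_of_pos (by norm_num) m
  have h2 : (0:ℝ) < 2^m := Real.rpow_pos_of_pos (by norm_num) m
  have h3 : (0:ℝ) ≤ (3/2:ℝ)^(m-2) := Real.rpow_nonneg (by norm_num) _
  have h4 : (0:ℝ) ≤ m*((m-1)*(3/2)^(m-2)) :=
    mul_nonneg (by linarith) (mul_nonneg (by linarith) h3)
  nlinarith

lemma pointwise (m : ℝ) (hm : 2 ≤ m) (x y : ℝ) :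
    |x+y|^m ≤ |x|^m + (m*x*|x|^(m-2))*y + K m * (|x|^(m-2)*y^2 + |y|^m) := by
  have hm0 : (0:ℝ) < m := by linarith
  have hm2 : (0:ℝ) ≤ m - 2 := by linarith
  have hK := K_pos m hm
  rcases eq_or_ne y 0 with rfl | hy
  · simp [Real.zero_rpow hm0.ne', abs_nonneg, Real.rpow_nonneg,
      mul_nonneg hK.le (mul_nonneg (Real.rpow_nonneg (abs_nonneg x) _) (sq_nonneg (0:ℝ)))]
  have hy0 : 0 < |y| := abs_pos.2 hy
  have hym : (0:ℝ) < |y|^m := Real.rpow_pos_of_pos hy0 m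
  by_cases hxy : |x| ≤ 2*|y|
  · -- case 1
    have hL : |x+y|^m ≤ 3^m * |y|^m := by
      calc |x+y|^m ≤ (3*|y|)^m := by
            apply Real.rpow_le_rpow (abs_nonneg _) ?_ hm0.le
            calc |x+y| ≤ |x| + |y| := abs_add_le x y
              _ ≤ 3*|y| := by linarith
        _ = 3^m * |y|^m := Real.mul_rpow (by norm_num) (abs_nonneg y)
    have hg : |(m*x*|x|^(m-2))*y| ≤ m*2^m*|y|^m := by
      rw [abs_mul, abs_mul, abs_mul, abs_of_nonneg hm0.le,
        abs_of_nonneg (Real.rpow_nonneg (abs_nonneg x) _)]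
      have hx2 : |x| * |x|^(m-2) ≤ (2*|y|) * (2*|y|)^(m-2) := by
        have h1 : |x|^(m-2) ≤ (2*|y|)^(m-2) := Real.rpow_le_rpow (abs_nonneg x) hxy hm2
        exact mul_le_mul hxy h1 (Real.rpow_nonneg (abs_nonneg x) _) (by positivity)
      have hx3 : (2*|y|) * (2*|y|)^(m-2) * |y| = 2^(m-1) * |y|^m := by
        rw [Real.mul_rpow (by norm_num) (abs_nonneg y)]
        have e2 : (2:ℝ)^(m-1) = 2 * 2^(m-2) := by
          rw [show m-1 = 1 + (m-2) by ring, Real.rpow_add (by norm_num : (0:ℝ) < 2),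
            Real.rpow_one]
        have e3 : |y| * |y|^(m-2) * |y| = |y|^m := by
          have h5 : |y|^(m-2) * |y|^((2:ℕ):ℝ) = |y|^m := by
            rw [← Real.rpow_add hy0]; norm_num
          rw [← h5, Real.rpow_natCast]; ring
        rw [e2, ← e3]; ring
      calc m * |x| * |x|^(m-2) * |y| ≤ m * ((2*|y|) * (2*|y|)^(m-2) * |y|) := by
            rw [mul_assoc m, mul_assoc m]
            apply mul_le_mul_of_nonneg_left ?_ hm0.le
            exact mul_le_mul_of_nonneg_right hx2 (abs_nonneg y)
        _ = m * (2^(m-1) * |y|^m) := by rw [hx3]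
        _ ≤ m*2^m*|y|^m := by
            have : (2:ℝ)^(m-1) ≤ 2^m :=
              Real.rpow_le_rpow_of_exponent_le (by norm_num) (by linarith)
            rw [← mul_assoc]
            exact mul_le_mul_of_nonneg_right
              (mul_le_mul_of_nonneg_left this hm0.le) hym.le
    have h2m : m*2^(m:ℝ) ≤ m*2^m := le_refl _
    have hxm : (0:ℝ) ≤ |x|^m := Real.rpow_nonneg (abs_nonneg x) _
    have hxm2 : (0:ℝ) ≤ |x|^(m-2)*y^2 := by positivity
    have h3m : (3:ℝ)^m + m*2^m ≤ K m := by
      unfold K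
      have h3 : (0:ℝ) ≤ (3/2:ℝ)^(m-2) := Real.rpow_nonneg (by norm_num) _
      have h4 : (0:ℝ) ≤ m*((m-1)*(3/2)^(m-2)) :=
        mul_nonneg (by linarith) (mul_nonneg (by linarith) h3)
      linarith
    have hgy : -(m*2^m*|y|^m) ≤ (m*x*|x|^(m-2))*y := neg_le_of_abs_le hg
    calc |x+y|^m ≤ 3^m*|y|^m := hL
      _ ≤ |x|^m + (m*x*|x|^(m-2))*y + K m * (|x|^(m-2)*y^2 + |y|^m) := by
          have : K m * (|x|^(m-2)*y^2 + |y|^m) ≥ K m * |y|^m := by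
            apply mul_le_mul_of_nonneg_left ?_ hK.le
            linarith
          nlinarith
  · -- case 2
    push_neg at hxy
    have hx0 : 0 < |x| := lt_of_le_of_lt (by positivity) hxy
    have hx : x ≠ 0 := abs_pos.1 hx0
    set u : ℝ := y/x with hu
    have huabs : |u| ≤ 1/2 := by
      rw [hu, abs_div, div_le_iff₀ hx0]
      linarith
    have h1u : (0:ℝ) ≤ 1 + u := by
      have := abs_le.1 huabs
      linarith [this.1]
    have hid : |x|^m = x^2 * |x|^(m-2) := by
      rw [← sq_abs, ← Real.rpow_natCast |x| 2, ← Real.rpow_add hx0]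
      norm_num
    have hsplit : |x+y|^m = |x|^m * (1+u)^m := by
      have : x + y = x * (1+u) := by rw [hu]; field_simp
      rw [this, abs_mul, abs_of_nonneg h1u, Real.mul_rpow (abs_nonneg x) h1u]
    have hov := one_var m hm huabs
    have step : |x+y|^m ≤ |x|^m + m*u*|x|^m + (m*((m-1)*(3/2)^(m-2)))*(u^2*|x|^m) := by
      rw [hsplit]
      have hxm : (0:ℝ) ≤ |x|^m := Real.rpow_nonneg (abs_nonneg x) _
      nlinarith [mul_le_mul_of_nonneg_left hov hxm]
    have e1 : m*u*|x|^m = (m*x*|x|^(m-2))*y := by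
      rw [hid, hu]; field_simp
    have e2 : u^2*|x|^m = |x|^(m-2)*y^2 := by
      rw [hid, hu]; field_simp
    rw [e1, e2] at step
    have hKge : m*((m-1)*(3/2)^(m-2)) ≤ K m := by
      unfold K
      have h1 : (0:ℝ) < 3^m := Real.rpow_pos_of_pos (by norm_num) m
      have h2 : (0:ℝ) < 2^m := Real.rpow_pos_of_pos (by norm_num) m
      nlinarith
    have hxm2 : (0:ℝ) ≤ |x|^(m-2)*y^2 := by positivity
    nlinarith [step, mul_le_mul_of_nonneg_right hKge hxm2, mul_pos hK hym]

section StepSection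

variable {Ω : Type} [MeasurableSpace Ω] {P : Measure Ω} [IsProbabilityMeasure P]

lemma int_rpow {f : Ω → ℝ} (hfm : Measurable f) {q p : ℝ} (hq : 0 ≤ q) (hqp : q ≤ p)
    (hf : MemLp f (ENNReal.ofReal p) P) :
    Integrable (fun ω => |f ω|^q) P := by
  rcases eq_or_lt_of_le hq with hq0 | hq0
  · simp only [← hq0, Real.rpow_zero]
    exact integrable_const 1
  · have hfq : MemLp f (ENNReal.ofReal q) P :=
      hf.mono_exponent (ENNReal.ofReal_le_ofReal hqp)
    have := hfq.integrable_norm_rpow (by simpa [ENNReal.ofReal_eq_zero] using hq0)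
      ENNReal.ofReal_ne_top
    simpa [ENNReal.toReal_ofReal hq, Real.norm_eq_abs] using this

lemma lyap {f : Ω → ℝ} {q p : ℝ} (hq : 0 ≤ q) (hqp : q ≤ p) (hp : 0 < p)
    (hf : MemLp f (ENNReal.ofReal p) P) :
    ∫ ω, |f ω|^q ∂P ≤ (∫ ω, |f ω|^p ∂P)^(q/p) := by
  rcases eq_or_lt_of_le hq with hq0 | hq0
  · simp [← hq0, Real.rpow_zero]
  have hq0' : ENNReal.ofReal q ≠ 0 := by simpa [ENNReal.ofReal_eq_zero] using hq0
  have hp0' : ENNReal.ofReal p ≠ 0 := by simpa [ENNReal.ofReal_eq_zero] using hp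
  have hfq : MemLp f (ENNReal.ofReal q) P :=
    hf.mono_exponent (ENNReal.ofReal_le_ofReal hqp)
  have h1 : eLpNorm f (ENNReal.ofReal q) P ≤ eLpNorm f (ENNReal.ofReal p) P :=
    eLpNorm_le_eLpNorm_of_exponent_le (ENNReal.ofReal_le_ofReal hqp) hf.1
  rw [hfq.eLpNorm_eq_integral_rpow_norm hq0' ENNReal.ofReal_ne_top,
    hf.eLpNorm_eq_integral_rpow_norm hp0' ENNReal.ofReal_ne_top,
    ENNReal.ofReal_le_ofReal_iff (by positivity)] at h1
  simp only [ENNReal.toReal_ofReal hq, ENNReal.toReal_ofReal hp.le, Real.norm_eq_abs] at h1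
  -- h1 : (∫ |f|^q)^(q⁻¹) ≤ (∫ |f|^p)^(p⁻¹)
  have hAq : 0 ≤ ∫ ω, |f ω|^q ∂P := integral_nonneg fun ω => Real.rpow_nonneg (abs_nonneg _) _
  have hAp : 0 ≤ ∫ ω, |f ω|^p ∂P := integral_nonneg fun ω => Real.rpow_nonneg (abs_nonneg _) _
  have h2 := Real.rpow_le_rpow (Real.rpow_nonneg hAq _) h1 hq
  rwa [← Real.rpow_mul hAq, ← Real.rpow_mul hAp, inv_mul_cancel₀ hq0.ne', Real.rpow_one,
    inv_mul_eq_div] at h2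

lemma step {S U : Ω → ℝ} (hSm : Measurable S) (hUm : Measurable U)
    (hind : IndepFun S U P) {m : ℝ} (hm : 2 ≤ m)
    (hS : MemLp S (ENNReal.ofReal m) P) (hU : MemLp U (ENNReal.ofReal m) P)
    (hU0 : ∫ ω, U ω ∂P = 0) :
    ∫ ω, |S ω + U ω|^m ∂P ≤ ∫ ω, |S ω|^m ∂P
      + K m * ((∫ ω, |S ω|^(m-2) ∂P) * (∫ ω, U ω^2 ∂P) + ∫ ω, |U ω|^m ∂P) := by
  have hm0 : (0:ℝ) < m := by linarith
  have hm2 : (0:ℝ) ≤ m - 2 := by linarith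
  have h1m : (1:ℝ≥0∞) ≤ ENNReal.ofReal m := ENNReal.one_le_ofReal.2 (by linarith)
  -- integrabilities
  have iSm : Integrable (fun ω => |S ω|^m) P := int_rpow hSm hm0.le le_rfl hS
  have iUm : Integrable (fun ω => |U ω|^m) P := int_rpow hUm hm0.le le_rfl hU
  have iSm2 : Integrable (fun ω => |S ω|^(m-2)) P := int_rpow hSm hm2 (by linarith) hS
  have iU2 : Integrable (fun ω => U ω^2) P := by
    have h := int_rpow hUm (by norm_num : (0:ℝ) ≤ 2) hm hU
    apply h.congr
    filter_upwards with ω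
    rw [show ((2:ℝ)) = ((2:ℕ):ℝ) by norm_num, Real.rpow_natCast, sq_abs]
  have iU1 : Integrable U P := hU.integrable h1m
  have iSm1 : Integrable (fun ω => |S ω|^(m-1)) P :=
    int_rpow hSm (by linarith) (by linarith) hS
  have igS : Integrable (fun ω => m * S ω * |S ω|^(m-2)) P := by
    apply (iSm1.const_mul m).mono'
      ((measurable_const.mul hSm).mul (by fun_prop : Measurable fun ω => |S ω|^(m-2))).aestronglyMeasurable
    filter_upwards with ω
    simp only [Pi.mul_apply]
    rw [Real.norm_eq_abs, abs_mul, abs_mul, abs_of_nonneg hm0.le,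
      abs_of_nonneg (Real.rpow_nonneg (abs_nonneg _) _)]
    rcases eq_or_ne (S ω) 0 with h | h
    · simp [h, Real.zero_rpow (by linarith : m - 1 ≠ 0)]
    · have h0 : 0 < |S ω| := abs_pos.2 h
      have : |S ω| * |S ω|^(m-2) = |S ω|^(m-1) := by
        nth_rewrite 1 [← Real.rpow_one |S ω|]
        rw [← Real.rpow_add h0, show (1:ℝ)+(m-2) = m-1 by ring]
      rw [mul_assoc, this]
  -- independence of composed maps
  have hindg : IndepFun (fun ω => m * S ω * |S ω|^(m-2)) U P := by
    have := hind.comp (φ := fun x : ℝ => m * x * |x|^(m-2)) (ψ := id)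
      (by fun_prop) measurable_id
    simpa [Function.comp_def] using this
  have hind2 : IndepFun (fun ω => |S ω|^(m-2)) (fun ω => U ω^2) P := by
    have := hind.comp (φ := fun x : ℝ => |x|^(m-2)) (ψ := fun x : ℝ => x^2)
      (by fun_prop) (by fun_prop)
    simpa [Function.comp_def] using this
  have iprod1 : Integrable (fun ω => (m * S ω * |S ω|^(m-2)) * U ω) P :=
    hindg.integrable_mul igS iU1
  have iprod2 : Integrable (fun ω => |S ω|^(m-2) * U ω^2) P :=
    hind2.integrable_mul iSm2 iU2
  have eprod1 : ∫ ω, (m * S ω * |S ω|^(m-2)) * U ω ∂P = 0 := by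
    have h := hindg.integral_mul_eq_mul_integral igS.1 iU1.1
    calc ∫ ω, (m * S ω * |S ω|^(m-2)) * U ω ∂P
        = (∫ ω, m * S ω * |S ω|^(m-2) ∂P) * ∫ ω, U ω ∂P := h
      _ = 0 := by rw [hU0, mul_zero]
  have eprod2 : ∫ ω, |S ω|^(m-2) * U ω^2 ∂P
      = (∫ ω, |S ω|^(m-2) ∂P) * ∫ ω, U ω^2 ∂P :=
    hind2.integral_mul_eq_mul_integral iSm2.1 iU2.1
  -- main estimate
  have iLHS : Integrable (fun ω => |S ω + U ω|^m) P :=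
    int_rpow (hSm.add hUm) hm0.le le_rfl (hS.add hU)
  have iRHS : Integrable (fun ω => |S ω|^m + (m * S ω * |S ω|^(m-2)) * U ω
      + K m * (|S ω|^(m-2) * U ω^2 + |U ω|^m)) P :=
    (iSm.add iprod1).add ((iprod2.add iUm).const_mul (K m))
  calc ∫ ω, |S ω + U ω|^m ∂P
      ≤ ∫ ω, (|S ω|^m + (m * S ω * |S ω|^(m-2)) * U ω
          + K m * (|S ω|^(m-2) * U ω^2 + |U ω|^m)) ∂P :=
        integral_mono iLHS iRHS (fun ω => pointwise m hm (S ω) (U ω))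
    _ = ∫ ω, |S ω|^m ∂P + ∫ ω, (m * S ω * |S ω|^(m-2)) * U ω ∂P
        + K m * ((∫ ω, |S ω|^(m-2) * U ω^2 ∂P) + ∫ ω, |U ω|^m ∂P) := by
        have I1 : Integrable (fun ω => |S ω|^m + (m * S ω * |S ω|^(m-2)) * U ω) P :=
          iSm.add iprod1
        have I2 : Integrable (fun ω => K m * (|S ω|^(m-2) * U ω^2 + |U ω|^m)) P :=
          (iprod2.add iUm).const_mul (K m)
        rw [integral_add I1 I2, integral_add iSm iprod1, MeasureTheory.integral_const_mul,
          integral_add iprod2 iUm]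
    _ = ∫ ω, |S ω|^m ∂P
        + K m * ((∫ ω, |S ω|^(m-2) ∂P) * (∫ ω, U ω^2 ∂P) + ∫ ω, |U ω|^m ∂P) := by
        rw [eprod1, eprod2, add_zero]

end StepSection

end PetrovAux

open PetrovAux

/-- **Petrov's moment inequality** (Petrov 1995, Theorem 2.10). For every real
`m ≥ 2` there exists a constant `c_m`, depending only on `m`, such that for any
independent centred real random variables `U₁,…,Uₙ` (with finite `m`-th absolute
moments), `E|∑ᵢ Uᵢ|^m ≤ c_m · n^{m/2 − 1} · ∑ᵢ E|Uᵢ|^m`. -/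
theorem petrov_moment_inequality (m : ℝ) (hm : 2 ≤ m) :
    ∃ c : ℝ, 0 < c ∧
      ∀ (Ω : Type) (_ : MeasurableSpace Ω) (P : Measure Ω),
        IsProbabilityMeasure P →
        ∀ (n : ℕ) (U : Fin n → Ω → ℝ),
          (∀ i, Measurable (U i)) →
          iIndepFun U P →
          (∀ i, Integrable (fun ω => |U i ω| ^ m) P) →
          (∀ i, (∫ ω, U i ω ∂P) = 0) →
          (∫ ω, |∑ i, U i ω| ^ m ∂P)
            ≤ c * (n : ℝ) ^ (m / 2 - 1) * ∑ i, ∫ ω, |U i ω| ^ m ∂P := by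
  have hm0 : (0:ℝ) < m := by linarith
  have hK := K_pos m hm
  refine ⟨2*K m + (2*K m)^(m/2), by positivity, ?_⟩
  intro Ω mΩ P hP n U hUmeas hind hUint hU0
  set c : ℝ := 2*K m + (2*K m)^(m/2) with hc
  have hc0 : 0 < c := by positivity
  rcases Nat.eq_zero_or_pos n with rfl | hn
  · simp [Real.zero_rpow hm0.ne']
  -- setup
  have hmem : ∀ i, MemLp (U i) (ENNReal.ofReal m) P := by
    intro i
    have hne0 : ENNReal.ofReal m ≠ 0 := by simpa [ENNReal.ofReal_eq_zero] using hm0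
    have h1 : MemLp (fun x => ‖U i x‖ ^ (ENNReal.ofReal m).toReal)
        (ENNReal.ofReal m / ENNReal.ofReal m) P := by
      rw [ENNReal.div_self hne0 ENNReal.ofReal_ne_top, memLp_one_iff_integrable]
      apply (hUint i).congr
      filter_upwards with ω
      rw [Real.norm_eq_abs, ENNReal.toReal_ofReal hm0.le]
    exact (memLp_norm_rpow_iff (hUmeas i).aestronglyMeasurable hne0
      ENNReal.ofReal_ne_top).1 h1
  set T : ℕ → Ω → ℝ :=
    fun j ω => ∑ i ∈ Finset.univ.filter (fun i : Fin n => (i:ℕ) < j), U i ω with hT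
  have hTmeas : ∀ j, Measurable (T j) := by
    intro j
    simp only [hT]
    exact Finset.measurable_sum _ (fun i _ => hUmeas i)
  have hTmem : ∀ j, MemLp (T j) (ENNReal.ofReal m) P := by
    intro j
    simp only [hT]
    exact memLp_finsetSum _ (fun i _ => hmem i)
  set a : ℕ → ℝ := fun j => ∫ ω, |T j ω|^m ∂P with ha
  set b : Fin n → ℝ := fun i => ∫ ω, |U i ω|^m ∂P with hb
  have hb0 : ∀ i, 0 ≤ b i :=
    fun i => integral_nonneg fun ω => Real.rpow_nonneg (abs_nonneg _) _
  have ha0 : ∀ j, 0 ≤ a j :=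
    fun j => integral_nonneg fun ω => Real.rpow_nonneg (abs_nonneg _) _
  set B : ℝ := ∑ i, b i with hB
  have hB0 : 0 ≤ B := Finset.sum_nonneg fun i _ => hb0 i
  have hne : (Finset.range (n+1)).Nonempty := Finset.nonempty_range_iff.2 (Nat.succ_ne_zero n)
  set M : ℝ := (Finset.range (n+1)).sup' hne a with hM
  have haM : ∀ j, j ≤ n → a j ≤ M :=
    fun j hj => Finset.le_sup' a (Finset.mem_range.2 (Nat.lt_succ_of_le hj))
  have hM0 : 0 ≤ M := le_trans (ha0 0) (haM 0 (Nat.zero_le n))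
  -- the one-step recursion
  have key : ∀ j (hj : j < n),
      a (j+1) ≤ a j + K m * (M^((m-2)/m) * (b ⟨j, hj⟩)^(2/m) + b ⟨j, hj⟩) := by
    intro j hj
    set jf : Fin n := ⟨j, hj⟩ with hjf
    have hindj : IndepFun (T j) (U jf) P := by
      have hnot : jf ∉ Finset.univ.filter (fun i : Fin n => (i:ℕ) < j) := by
        simp [hjf]
      have h := hind.indepFun_finsetSum_of_notMem hUmeas hnot
      refine h.congr ?_ ?_
      · filter_upwards with ω
        simp [hT]
      · exact Filter.EventuallyEq.rfl
    have hTsucc : ∀ ω, T (j+1) ω = T j ω + U jf ω := by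
      intro ω
      have hins : Finset.univ.filter (fun i : Fin n => (i:ℕ) < j+1)
          = insert jf (Finset.univ.filter (fun i : Fin n => (i:ℕ) < j)) := by
        ext i
        simp only [Finset.mem_insert, Finset.mem_filter, Finset.mem_univ, true_and]
        constructor
        · intro h
          rcases Nat.lt_succ_iff_lt_or_eq.1 h with h | h
          · exact Or.inr h
          · exact Or.inl (Fin.ext h)
        · rintro (rfl | h)
          · exact Nat.lt_succ_self j
          · exact Nat.lt_succ_of_lt h
      simp only [hT]
      rw [hins, Finset.sum_insert (by simp [hjf])]
      ring
    have hstep := step (hTmeas j) (hUmeas jf) hindj hm (hTmem j) (hmem jf) (hU0 jf)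
    have hL1 : ∫ ω, |T j ω|^(m-2) ∂P ≤ M^((m-2)/m) := by
      calc ∫ ω, |T j ω|^(m-2) ∂P ≤ (∫ ω, |T j ω|^m ∂P)^((m-2)/m) :=
            lyap (by linarith) (by linarith) hm0 (hTmem j)
        _ ≤ M^((m-2)/m) :=
            Real.rpow_le_rpow (ha0 j) (haM j hj.le) (div_nonneg (by linarith) hm0.le)
    have hL2 : ∫ ω, (U jf ω)^2 ∂P ≤ (b jf)^(2/m) := by
      have he : ∫ ω, (U jf ω)^2 ∂P = ∫ ω, |U jf ω|^((2:ℝ)) ∂P := by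
        apply integral_congr_ae
        filter_upwards with ω
        rw [show ((2:ℝ)) = ((2:ℕ):ℝ) by norm_num, Real.rpow_natCast, sq_abs]
      rw [he]
      exact lyap (by norm_num) hm hm0 (hmem jf)
    have hnn1 : 0 ≤ ∫ ω, |T j ω|^(m-2) ∂P :=
      integral_nonneg fun ω => Real.rpow_nonneg (abs_nonneg _) _
    have hnn2 : 0 ≤ ∫ ω, (U jf ω)^2 ∂P := integral_nonneg fun ω => sq_nonneg _
    have hmul : (∫ ω, |T j ω|^(m-2) ∂P) * (∫ ω, (U jf ω)^2 ∂P)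
        ≤ M^((m-2)/m) * (b jf)^(2/m) :=
      mul_le_mul hL1 hL2 hnn2 (Real.rpow_nonneg hM0 _)
    calc a (j+1) = ∫ ω, |T j ω + U jf ω|^m ∂P := by
          rw [ha]
          exact integral_congr_ae (by filter_upwards with ω; rw [hTsucc ω])
      _ ≤ a j + K m * ((∫ ω, |T j ω|^(m-2) ∂P) * (∫ ω, (U jf ω)^2 ∂P) + b jf) := hstep
      _ ≤ a j + K m * (M^((m-2)/m) * (b jf)^(2/m) + b jf) := by
          have := mul_le_mul_of_nonneg_left (add_le_add_right hmul (b jf)) hK.le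
          linarith
  -- induction over partial sums
  have haux : ∀ j, j ≤ n →
      a j ≤ K m * (M^((m-2)/m)
        * (∑ i ∈ Finset.univ.filter (fun i : Fin n => (i:ℕ) < j), (b i)^(2/m))
        + ∑ i ∈ Finset.univ.filter (fun i : Fin n => (i:ℕ) < j), b i) := by
    intro j
    induction j with
    | zero =>
      intro _
      have hT0 : a 0 = 0 := by
        rw [ha]
        have : ∀ ω, |T 0 ω|^m = 0 := by
          intro ω
          rw [hT]
          simp [Real.zero_rpow hm0.ne']
        simp only [this, integral_zero]
      rw [hT0]
      have h1 : 0 ≤ M^((m-2)/m) := Real.rpow_nonneg hM0 _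
      have h2 : 0 ≤ ∑ i ∈ Finset.univ.filter (fun i : Fin n => (i:ℕ) < 0), (b i)^(2/m) :=
        Finset.sum_nonneg fun i _ => Real.rpow_nonneg (hb0 i) _
      have h3 : 0 ≤ ∑ i ∈ Finset.univ.filter (fun i : Fin n => (i:ℕ) < 0), b i :=
        Finset.sum_nonneg fun i _ => hb0 i
      exact mul_nonneg hK.le (add_nonneg (mul_nonneg h1 h2) h3)
    | succ j ih =>
      intro hj1
      have hj : j < n := hj1
      have hins : Finset.univ.filter (fun i : Fin n => (i:ℕ) < j+1)
          = insert (⟨j, hj⟩ : Fin n) (Finset.univ.filter (fun i : Fin n => (i:ℕ) < j)) := by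
        ext i
        simp only [Finset.mem_insert, Finset.mem_filter, Finset.mem_univ, true_and]
        constructor
        · intro h
          rcases Nat.lt_succ_iff_lt_or_eq.1 h with h | h
          · exact Or.inr h
          · exact Or.inl (Fin.ext h)
        · rintro (rfl | h)
          · exact Nat.lt_succ_self j
          · exact Nat.lt_succ_of_lt h
      have hnotmem : (⟨j, hj⟩ : Fin n) ∉ Finset.univ.filter (fun i : Fin n => (i:ℕ) < j) := by
        simp
      calc a (j+1) ≤ a j + K m * (M^((m-2)/m) * (b ⟨j, hj⟩)^(2/m) + b ⟨j, hj⟩) := key j hj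
        _ ≤ K m * (M^((m-2)/m)
              * (∑ i ∈ Finset.univ.filter (fun i : Fin n => (i:ℕ) < j), (b i)^(2/m))
              + ∑ i ∈ Finset.univ.filter (fun i : Fin n => (i:ℕ) < j), b i)
            + K m * (M^((m-2)/m) * (b ⟨j, hj⟩)^(2/m) + b ⟨j, hj⟩) := by
            have := ih (le_of_lt hj)
            linarith
        _ = K m * (M^((m-2)/m)
              * (∑ i ∈ Finset.univ.filter (fun i : Fin n => (i:ℕ) < j+1), (b i)^(2/m))
              + ∑ i ∈ Finset.univ.filter (fun i : Fin n => (i:ℕ) < j+1), b i) := by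
            rw [hins, Finset.sum_insert hnotmem, Finset.sum_insert hnotmem]
            ring
  -- conclude M ≤ K m * (M^α * H + B)
  set H : ℝ := ∑ i, (b i)^(2/m) with hH
  have hH0 : 0 ≤ H := Finset.sum_nonneg fun i _ => Real.rpow_nonneg (hb0 i) _
  have hMbound : M ≤ K m * (M^((m-2)/m) * H + B) := by
    obtain ⟨j, hjmem, hMeq⟩ := Finset.exists_mem_eq_sup' hne a
    have hjle : j ≤ n := Nat.lt_succ_iff.1 (Finset.mem_range.1 hjmem)
    have h1 := haux j hjle
    have hsub : Finset.univ.filter (fun i : Fin n => (i:ℕ) < j) ⊆ Finset.univ :=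
      Finset.filter_subset _ _
    have h2 : (∑ i ∈ Finset.univ.filter (fun i : Fin n => (i:ℕ) < j), (b i)^(2/m)) ≤ H :=
      Finset.sum_le_sum_of_subset_of_nonneg hsub (fun i _ _ => Real.rpow_nonneg (hb0 i) _)
    have h3 : (∑ i ∈ Finset.univ.filter (fun i : Fin n => (i:ℕ) < j), b i) ≤ B :=
      Finset.sum_le_sum_of_subset_of_nonneg hsub (fun i _ _ => hb0 i)
    have h4 : 0 ≤ M^((m-2)/m) := Real.rpow_nonneg hM0 _
    rw [← hMeq] at h1
    calc M ≤ K m * (M^((m-2)/m)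
          * (∑ i ∈ Finset.univ.filter (fun i : Fin n => (i:ℕ) < j), (b i)^(2/m))
          + ∑ i ∈ Finset.univ.filter (fun i : Fin n => (i:ℕ) < j), b i) := h1
      _ ≤ K m * (M^((m-2)/m) * H + B) := by
          apply mul_le_mul_of_nonneg_left ?_ hK.le
          have := mul_le_mul_of_nonneg_left h2 h4
          linarith
  -- Hölder on the finite sum: H ≤ n^(1-2/m) * B^(2/m)
  have hn0 : (0:ℝ) < (n:ℝ) := by exact_mod_cast hn
  have hHolder : H ≤ (n:ℝ)^(1-2/m) * B^(2/m) := by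
    have hmean := Real.rpow_arith_mean_le_arith_mean_rpow Finset.univ
      (fun _ : Fin n => (n:ℝ)⁻¹) (fun i => (b i)^(2/m))
      (fun i _ => by positivity)
      (by
        rw [Finset.sum_const, Finset.card_univ, Fintype.card_fin, nsmul_eq_mul,
          mul_inv_cancel₀ hn0.ne'])
      (fun i _ => Real.rpow_nonneg (hb0 i) _)
      (by linarith : (1:ℝ) ≤ m/2)
    have e1 : ∑ i : Fin n, (n:ℝ)⁻¹ * (b i)^(2/m) = (n:ℝ)⁻¹ * H := by
      rw [hH, Finset.mul_sum]
    have e2 : ∑ i : Fin n, (n:ℝ)⁻¹ * ((b i)^(2/m))^(m/2) = (n:ℝ)⁻¹ * B := by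
      rw [hB, Finset.mul_sum]
      apply Finset.sum_congr rfl
      intro i _
      rw [← Real.rpow_mul (hb0 i), show (2/m)*(m/2) = 1 by field_simp, Real.rpow_one]
    rw [e1, e2] at hmean
    -- hmean : ((n)⁻¹ * H)^(m/2) ≤ (n)⁻¹ * B
    have h5 : (n:ℝ)⁻¹ * H ≤ ((n:ℝ)⁻¹ * B)^(2/m) := by
      have hbase : 0 ≤ (n:ℝ)⁻¹ * H := mul_nonneg (inv_nonneg.2 hn0.le) hH0
      have h6 := Real.rpow_le_rpow (Real.rpow_nonneg hbase (m/2)) hmean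
        (div_nonneg (by norm_num : (0:ℝ) ≤ 2) hm0.le)
      rwa [← Real.rpow_mul hbase, show (m/2)*(2/m) = 1 by field_simp,
        Real.rpow_one] at h6
    calc H = (n:ℝ) * ((n:ℝ)⁻¹ * H) := by field_simp
      _ ≤ (n:ℝ) * ((n:ℝ)⁻¹ * B)^(2/m) := by
          exact mul_le_mul_of_nonneg_left h5 hn0.le
      _ = (n:ℝ)^(1-2/m) * B^(2/m) := by
          rw [Real.mul_rpow (inv_nonneg.2 hn0.le) hB0, ← Real.rpow_neg_one (n:ℝ),
            ← Real.rpow_mul hn0.le]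
          nth_rewrite 1 [← Real.rpow_one (n:ℝ)]
          rw [← mul_assoc, ← Real.rpow_add hn0,
            show (1:ℝ) + -1 * (2/m) = 1 - 2/m by ring]
  -- final algebra
  set D : ℝ := (n:ℝ)^(m/2-1) * B with hD
  have hD0 : 0 ≤ D := mul_nonneg (Real.rpow_nonneg hn0.le _) hB0
  have hBD : B ≤ D := by
    have h1 : (1:ℝ) ≤ (n:ℝ)^(m/2-1) := by
      have h2 := Real.rpow_le_rpow_of_exponent_le (by exact_mod_cast hn : (1:ℝ) ≤ (n:ℝ))
        (by linarith : (0:ℝ) ≤ m/2-1)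
      rwa [Real.rpow_zero] at h2
    nlinarith [mul_le_mul_of_nonneg_right h1 hB0]
  have hDtheta : H ≤ D^(2/m) := by
    calc H ≤ (n:ℝ)^(1-2/m) * B^(2/m) := hHolder
      _ = D^(2/m) := by
          rw [hD, Real.mul_rpow (Real.rpow_nonneg hn0.le _) hB0, ← Real.rpow_mul hn0.le,
            show (m/2-1)*(2/m) = 1-2/m by field_simp]
  have hfinal : M ≤ K m * (M^((m-2)/m) * D^(2/m) + D) := by
    refine le_trans hMbound (mul_le_mul_of_nonneg_left ?_ hK.le)
    have := mul_le_mul_of_nonneg_left hDtheta (Real.rpow_nonneg hM0 ((m-2)/m))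
    linarith
  have hMD : M ≤ c * D := by
    by_cases hcase : M ≤ 2*K m*D
    · have h1 : 0 ≤ (2*K m)^(m/2) * D := mul_nonneg (Real.rpow_nonneg (by linarith) _) hD0
      rw [hc]
      have e0 : (2*K m + (2*K m)^(m/2))*D = 2*K m*D + (2*K m)^(m/2)*D := by ring
      linarith
    · push_neg at hcase
      have hMpos : 0 < M :=
        lt_of_le_of_lt (mul_nonneg (mul_nonneg (by norm_num) hK.le) hD0) hcase
      have h7 : M < 2*K m * (M^((m-2)/m) * D^(2/m)) := by
        have e0 : K m*(M^((m-2)/m) * D^(2/m) + D)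
            = K m*(M^((m-2)/m) * D^(2/m)) + K m*D := by ring
        have e1 : 2*K m * (M^((m-2)/m) * D^(2/m)) = 2*(K m*(M^((m-2)/m) * D^(2/m))) := by
          ring
        linarith
      have hMtheta : M^(2/m) < 2*K m * D^(2/m) := by
        have hpow : 0 < M^(2/m - 1) := Real.rpow_pos_of_pos hMpos _
        have h10 := mul_lt_mul_of_pos_right h7 hpow
        have e3 : M * M^(2/m-1) = M^(2/m) := by
          nth_rewrite 1 [← Real.rpow_one M]
          rw [← Real.rpow_add hMpos, show (1:ℝ) + (2/m-1) = 2/m by ring]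
        have e4 : 2*K m*(M^((m-2)/m) * D^(2/m)) * M^(2/m-1)
            = 2*K m*D^(2/m) * (M^((m-2)/m) * M^(2/m-1)) := by ring
        have e5 : M^((m-2)/m) * M^(2/m-1) = 1 := by
          rw [← Real.rpow_add hMpos, show (m-2)/m + (2/m-1) = 0 by field_simp; ring,
            Real.rpow_zero]
        calc M^(2/m) = M * M^(2/m-1) := e3.symm
          _ < 2*K m*(M^((m-2)/m) * D^(2/m)) * M^(2/m-1) := h10
          _ = 2*K m*D^(2/m) := by rw [e4, e5, mul_one]
      have h8 : M < (2*K m)^(m/2) * D := by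
        have h9 := Real.rpow_lt_rpow (Real.rpow_nonneg hM0 _) hMtheta
          (by positivity : (0:ℝ) < m/2)
        rw [← Real.rpow_mul hM0, show (2/m)*(m/2) = 1 by field_simp, Real.rpow_one] at h9
        rwa [Real.mul_rpow (by nlinarith : (0:ℝ) ≤ 2*K m) (Real.rpow_nonneg hD0 _),
          ← Real.rpow_mul hD0, show (2/m)*(m/2) = 1 by field_simp, Real.rpow_one] at h9
      have h11 : 0 ≤ 2*K m*D := mul_nonneg (by linarith) hD0
      rw [hc]
      have e0 : (2*K m + (2*K m)^(m/2))*D = 2*K m*D + (2*K m)^(m/2)*D := by ring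
      linarith
  have hTn : ∀ ω, (∑ i, U i ω) = T n ω := by
    intro ω
    simp only [hT]
    rw [Finset.filter_true_of_mem (fun i _ => i.isLt)]
  have hgoal : ∫ ω, |∑ i, U i ω|^m ∂P = a n := by
    rw [ha]
    exact integral_congr_ae (by filter_upwards with ω; rw [hTn ω])
  rw [hgoal, mul_assoc]
  calc a n ≤ M := haM n le_rfl
    _ ≤ c * D := hMD
    _ = c * ((n:ℝ)^(m/2-1) * B) := by rw [hD]
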